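/- Let t ∈ ℤ[1/2] be such that the field E := ℚ(√−7, √−t) ⊆ ℂ has degree 4 over ℚ and contains none of √3, √−1, √−3. Let T be a finite subset of {odd primes} ∪ {4}, let N = ∏_{m ∈ T} m, and let A := {σ ∈ Gal(E(ζ_N)/E) : σ(ζ_ℓ) ≠ ζ_ℓ for every ℓ ∈ T}. Then every fourth power of an element of Gal(E(ζ_N)/E) lies in the subgroup generated by A, i.e. Gal(E(ζ_N)/E)⁴ ⊆ ⟨A⟩. -/

import Mathlib

open IntermediateField Polynomial

lemma sq_coset_avoid {p : ℕ} (hp : p.Prime) (hp7 : 7 ≤ p) (r c d : (ZMod p)ˣ) :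
    ∃ y : (ZMod p)ˣ, y * y * r ≠ c ∧ y * y * r ≠ d := by
  haveI : Fact p.Prime := ⟨hp⟩
  by_contra hcon
  push_neg at hcon
  classical
  have himg : (Finset.univ.image fun y : (ZMod p)ˣ => y * y * r) ⊆ {c, d} := by
    intro z hz
    simp only [Finset.mem_image] at hz
    obtain ⟨y, -, rfl⟩ := hz
    rcases eq_or_ne (y * y * r) c with h | h
    · simp [h]
    · simp [hcon y h]
  have hfib : ∀ b ∈ (Finset.univ.image fun y : (ZMod p)ˣ => y * y * r),
      (Finset.univ.filter fun y : (ZMod p)ˣ => y * y * r = b).card ≤ 2 := by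
    intro b hb
    simp only [Finset.mem_image] at hb
    obtain ⟨y0, -, hy0⟩ := hb
    have hsub : (Finset.univ.filter fun y : (ZMod p)ˣ => y * y * r = b) ⊆ {y0, -y0} := by
      intro y hy
      simp only [Finset.mem_filter] at hy
      have : y * y = y0 * y0 := by
        have := hy.2.trans hy0.symm
        exact mul_right_cancel this
      have hc : (y : ZMod p) * y = (y0 : ZMod p) * y0 := by
        exact_mod_cast congrArg (fun u : (ZMod p)ˣ => (u : ZMod p)) this
      rcases mul_self_eq_mul_self_iff.mp hc with h | h
      · exact Finset.mem_insert.mpr (Or.inl (Units.ext h))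
      · refine Finset.mem_insert.mpr (Or.inr (Finset.mem_singleton.mpr (Units.ext ?_)))
        simpa using h
    calc (Finset.univ.filter fun y : (ZMod p)ˣ => y * y * r = b).card
        ≤ ({y0, -y0} : Finset (ZMod p)ˣ).card := Finset.card_le_card hsub
      _ ≤ 2 := Finset.card_insert_le _ _ |>.trans (by simp)
  have hcard := Finset.card_le_mul_card_image (f := fun y : (ZMod p)ˣ => y * y * r)
    Finset.univ 2 hfib
  have himgcard : (Finset.univ.image fun y : (ZMod p)ˣ => y * y * r).card ≤ 2 :=
    (Finset.card_le_card himg).trans (Finset.card_insert_le _ _ |>.trans (by simp))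
  have hbig : Fintype.card (ZMod p)ˣ = p - 1 := ZMod.card_units p
  have : p - 1 ≤ 4 := by
    calc p - 1 = Finset.univ.card := by rw [← hbig]; simp
      _ ≤ 2 * (Finset.univ.image fun y : (ZMod p)ˣ => y * y * r).card := hcard
      _ ≤ 2 * 2 := by omega
      _ = 4 := rfl
  omega

lemma keyChoice {ℓ : ℕ} (hℓ : (ℓ.Prime ∧ ℓ ≠ 2) ∨ ℓ = 4) (g r : (ZMod ℓ)ˣ)
    (hr : ℓ = 3 ∨ ℓ = 4 → r ≠ 1) :
    ∃ y : (ZMod ℓ)ˣ, g ^ 4 * (y * y * r) ≠ 1 ∧ y * y * r ≠ 1 := by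
  rcases eq_or_ne ℓ 3 with rfl | h3
  · have hr' := hr (Or.inl rfl)
    revert hr'; revert g r; decide
  rcases eq_or_ne ℓ 4 with rfl | h4
  · have hr' := hr (Or.inr rfl)
    revert hr'; revert g r; decide
  rcases eq_or_ne ℓ 5 with rfl | h5
  · revert g r; decide
  · rcases hℓ with ⟨hp, h2⟩ | rfl
    · have h7 : 7 ≤ ℓ := by
        by_contra hlt
        interval_cases ℓ <;> simp_all (config := {decide := true})
      obtain ⟨y, hy1, hy2⟩ := sq_coset_avoid hp h7 r 1 (g ^ 4)⁻¹
      refine ⟨y, ?_, hy1⟩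
      intro hcon
      exact hy2 (eq_inv_iff_mul_eq_one.mpr (by rwa [mul_comm] at hcon))
    · exact absurd rfl h4

lemma castHom_crt_fst {a P : ℕ} (hco : a.Coprime P) (z : ZMod a × ZMod P) :
    ZMod.castHom (dvd_mul_right a P) (ZMod a) ((ZMod.chineseRemainder hco).symm z) = z.1 := by
  have h := (ZMod.chineseRemainder hco).apply_symm_apply z
  set w := (ZMod.chineseRemainder hco).symm z with hw
  have : (ZMod.chineseRemainder hco) w = (ZMod.cast w : ZMod a × ZMod P) := rfl
  rw [this] at h
  have h1 := congrArg Prod.fst h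
  rw [Prod.fst_zmod_cast] at h1
  rw [ZMod.castHom_apply]
  exact h1

lemma castHom_crt_snd {a P : ℕ} (hco : a.Coprime P) (z : ZMod a × ZMod P) :
    ZMod.castHom (dvd_mul_left P a) (ZMod P) ((ZMod.chineseRemainder hco).symm z) = z.2 := by
  have h := (ZMod.chineseRemainder hco).apply_symm_apply z
  set w := (ZMod.chineseRemainder hco).symm z with hw
  have : (ZMod.chineseRemainder hco) w = (ZMod.cast w : ZMod a × ZMod P) := rfl
  rw [this] at h
  have h2 := congrArg Prod.snd h
  rw [Prod.snd_zmod_cast] at h2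
  rw [ZMod.castHom_apply]
  exact h2

lemma crtChoice (T : Finset ℕ) (hcp : ∀ x ∈ T, ∀ y ∈ T, x ≠ y → Nat.Coprime x y)
    (P : ∀ ℓ : ℕ, (ZMod ℓ)ˣ → Prop)
    (hex : ∀ ℓ ∈ T, ∃ y : (ZMod ℓ)ˣ, P ℓ y) :
    ∃ x : (ZMod (∏ m ∈ T, m))ˣ, ∀ ℓ (_ : ℓ ∈ T) (hd : ℓ ∣ ∏ m ∈ T, m),
      P ℓ (ZMod.unitsMap hd x) := by
  classical
  induction T using Finset.induction_on with
  | empty => exact ⟨1, fun ℓ hm => absurd hm (Finset.notMem_empty ℓ)⟩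
  | @insert a s ha ih =>
    obtain ⟨xs, hxs⟩ := ih (fun x hx y hy hxy => hcp x (Finset.mem_insert_of_mem hx) y
      (Finset.mem_insert_of_mem hy) hxy) (fun ℓ hℓ => hex ℓ (Finset.mem_insert_of_mem hℓ))
    obtain ⟨ya, hya⟩ := hex a (Finset.mem_insert_self a s)
    have hco : a.Coprime (∏ m ∈ s, m) :=
      Nat.Coprime.prod_right (fun i hi => hcp a (Finset.mem_insert_self a s) i
        (Finset.mem_insert_of_mem hi) (fun h => ha (h ▸ hi)))
    have hprod : ∏ m ∈ insert a s, m = a * ∏ m ∈ s, m := Finset.prod_insert ha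
    -- build the unit
    set e := (ZMod.chineseRemainder hco).toMulEquiv with he
    set x0 : (ZMod (a * ∏ m ∈ s, m))ˣ :=
      (Units.mapEquiv e).symm (MulEquiv.prodUnits.symm (ya, xs)) with hx0
    have hfst : ZMod.unitsMap (dvd_mul_right a (∏ m ∈ s, m)) x0 = ya := by
      ext
      rw [ZMod.unitsMap_def]
      simp only [Units.coe_map, MonoidHom.coe_coe]
      have : (x0 : ZMod (a * ∏ m ∈ s, m)) = (ZMod.chineseRemainder hco).symm
          ((ya : ZMod a), (xs : ZMod (∏ m ∈ s, m))) := by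
        simp [hx0, Units.coe_mapEquiv]
        rfl
      rw [this, castHom_crt_fst]
    have hsnd : ZMod.unitsMap (dvd_mul_left (∏ m ∈ s, m) a) x0 = xs := by
      ext
      rw [ZMod.unitsMap_def]
      simp only [Units.coe_map, MonoidHom.coe_coe]
      have : (x0 : ZMod (a * ∏ m ∈ s, m)) = (ZMod.chineseRemainder hco).symm
          ((ya : ZMod a), (xs : ZMod (∏ m ∈ s, m))) := by
        simp [hx0, Units.coe_mapEquiv]
        rfl
      rw [this, castHom_crt_snd]
    rw [hprod]
    refine ⟨x0, ?_⟩
    intro ℓ hm hd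
    rcases Finset.mem_insert.mp hm with rfl | hs
    · show P ℓ (ZMod.unitsMap (dvd_mul_right ℓ (∏ m ∈ s, m)) x0)
      rw [hfst]; exact hya
    · show P ℓ (ZMod.unitsMap ((Finset.dvd_prod_of_mem _ hs).trans
        (dvd_mul_left (∏ m ∈ s, m) a)) x0)
      rw [← ZMod.unitsMap_comp (hm := Finset.dvd_prod_of_mem (fun m : ℕ => m) hs) (hd := dvd_mul_left (∏ m ∈ s, m) a), MonoidHom.comp_apply, hsnd]
      exact hxs ℓ hs (Finset.dvd_prod_of_mem _ hs)

lemma adjoinCyclo {F L : Type*} [Field F] [Field L] [Algebra F L] {ζ : L} {n : ℕ+}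
    (hζ : IsPrimitiveRoot ζ (n : ℕ)) :
    IsCyclotomicExtension {(n : ℕ)} F ↥(IntermediateField.adjoin F ({ζ} : Set L)) := by
  have hint : IsIntegral F ζ := by
    refine ⟨X ^ (n : ℕ) - 1, monic_X_pow_sub_C 1 n.pos.ne', ?_⟩
    simp [hζ.pow_eq_one]
  have H : (IntermediateField.adjoin F ({ζ} : Set L)).toSubalgebra = Algebra.adjoin F {ζ} :=
    adjoin_simple_toSubalgebra_of_isAlgebraic hint.isAlgebraic
  refine IsCyclotomicExtension.equiv _ _ _ (h := ?_)
    (.refl : ↥(IntermediateField.adjoin F ({ζ} : Set L)).toSubalgebra ≃ₐ[F] _)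
  rw [H]
  exact hζ.adjoin_isCyclotomicExtension F

def Zhalf : Subring ℚ := Subring.closure {(2 : ℚ)⁻¹}

set_option maxHeartbeats 2000000 in
set_option synthInstance.maxHeartbeats 200000 in
theorem stmt12 (t : ↥Zhalf)
    (z7 zt : ℂ) (hz7 : z7 ^ 2 = -7) (hzt : zt ^ 2 = -((t : ℚ) : ℂ))
    (E : IntermediateField ℚ ℂ) (hE : E = IntermediateField.adjoin ℚ {z7, zt})
    (hdeg : Module.finrank ℚ ↥E = 4)
    (h3 : ∀ w ∈ E, w ^ 2 ≠ 3) (hm1 : ∀ w ∈ E, w ^ 2 ≠ -1) (hm3 : ∀ w ∈ E, w ^ 2 ≠ -3)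
    (T : Finset ℕ) (hT : ∀ ℓ ∈ T, (Nat.Prime ℓ ∧ ℓ ≠ 2) ∨ ℓ = 4)
    (N : ℕ) (hN : N = ∏ m ∈ T, m)
    (ζ : ℂ) (hζ : IsPrimitiveRoot ζ N) :
    ∀ σ : (↥(IntermediateField.adjoin ↥E {ζ}) ≃ₐ[↥E] ↥(IntermediateField.adjoin ↥E {ζ})),
      σ ^ 4 ∈ Subgroup.closure
        {τ : (↥(IntermediateField.adjoin ↥E {ζ}) ≃ₐ[↥E] ↥(IntermediateField.adjoin ↥E {ζ})) |
          ∀ ℓ ∈ T, ∀ h : ζ ^ (N / ℓ) ∈ IntermediateField.adjoin ↥E {ζ},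
            ((τ ⟨ζ ^ (N / ℓ), h⟩ : ↥(IntermediateField.adjoin ↥E {ζ})) : ℂ) ≠ ζ ^ (N / ℓ)} := by
  classical
  subst hE
  set E := IntermediateField.adjoin ℚ {z7, zt} with hE
  set L := IntermediateField.adjoin (↥E) {ζ} with hL
  intro σ
  -- trivial case T = ∅
  rcases Finset.eq_empty_or_nonempty T with rfl | hTne
  · exact Subgroup.subset_closure (fun ℓ hℓ => absurd hℓ (Finset.notMem_empty ℓ))
  -- positivity
  have hNpos : 0 < N := by
    rw [hN]
    apply Finset.prod_pos
    intro m hm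
    rcases hT m hm with ⟨hp, -⟩ | rfl
    · exact hp.pos
    · norm_num
  haveI : NeZero N := ⟨hNpos.ne'⟩
  have hdvd : ∀ ℓ ∈ T, ℓ ∣ N := fun ℓ hm => hN ▸ Finset.dvd_prod_of_mem _ hm
  -- ζ inside L
  have hζmem : ζ ∈ L := subset_adjoin _ _ rfl
  set ζL : ↥L := ⟨ζ, hζmem⟩ with hζLdef
  have hζL : IsPrimitiveRoot ζL N := IsPrimitiveRoot.coe_submonoidClass_iff.mp hζ
  -- cyclotomic extension instance
  set np : ℕ+ := ⟨N, hNpos⟩ with hnp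
  haveI cycinst : IsCyclotomicExtension {(np : ℕ)} ↥E ↥L := adjoinCyclo (n := np) hζ
  haveI : FiniteDimensional ↥E ↥L := IsCyclotomicExtension.finiteDimensional {(np : ℕ)} ↥E ↥L
  haveI : IsGalois ↥E ↥L := IsCyclotomicExtension.isGalois {(np : ℕ)} ↥E ↥L
  set afun := hζL.autToPow ↥E with hafun
  -- key translation lemma
  have key : ∀ (ℓ : ℕ) (hm : ℓ ∈ T) (τ : ↥L ≃ₐ[↥E] ↥L) (hmem : ζ ^ (N / ℓ) ∈ L),
      (((τ ⟨ζ ^ (N / ℓ), hmem⟩ : ↥L) : ℂ) = ζ ^ (N / ℓ)) ↔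
        ZMod.unitsMap (hdvd ℓ hm) (afun τ) = 1 := by
    intro ℓ hm τ hmem
    have hℓpos : 0 < ℓ := Nat.pos_of_dvd_of_pos (hdvd ℓ hm) hNpos
    have hfac : N = (N / ℓ) * ℓ := (Nat.div_mul_cancel (hdvd ℓ hm)).symm
    have hprim : IsPrimitiveRoot (ζL ^ (N / ℓ)) ℓ := hζL.pow hNpos hfac
    have hsub : (⟨ζ ^ (N / ℓ), hmem⟩ : ↥L) = ζL ^ (N / ℓ) := by
      ext
      simp [hζLdef]
    rw [hsub]
    have hτζ : τ ζL = ζL ^ ((afun τ : (ZMod N)ˣ) : ZMod N).val := (hζL.autToPow_spec ↥E τ).symm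
    have hτ : τ (ζL ^ (N / ℓ)) = (ζL ^ (N / ℓ)) ^ ((afun τ : (ZMod N)ˣ) : ZMod N).val := by
      rw [map_pow, hτζ, ← pow_mul, ← pow_mul, mul_comm]
    have hcoe : (((τ (ζL ^ (N / ℓ)) : ↥L)) : ℂ) = ((ζL ^ (N / ℓ) : ↥L) : ℂ) ↔
        τ (ζL ^ (N / ℓ)) = ζL ^ (N / ℓ) := Subtype.coe_inj
    have hpow : ((ζL ^ (N / ℓ) : ↥L) : ℂ) = ζ ^ (N / ℓ) := by push_cast; rfl
    set v := ((afun τ : (ZMod N)ˣ) : ZMod N).val with hv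
    have step1 : (((τ (ζL ^ (N / ℓ)) : ↥L) : ℂ) = ζ ^ (N / ℓ)) ↔
        (ζL ^ (N / ℓ)) ^ v = ζL ^ (N / ℓ) := by
      rw [hτ, ← hpow, Subtype.coe_inj]
    have hN2 : 1 < N := by
      obtain ⟨ℓ0, hℓ0⟩ := hTne
      have h3ℓ : 3 ≤ ℓ0 := by
        rcases hT ℓ0 hℓ0 with ⟨hp, h2⟩ | rfl
        · rcases hp.two_le.lt_or_eq with h | h
          · omega
          · exact absurd h.symm h2
        · norm_num
      have := Nat.le_of_dvd hNpos (hdvd ℓ0 hℓ0)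
      omega
    have hvpos : 0 < v := by
      rcases Nat.eq_zero_or_pos v with h0 | h
      · exfalso
        haveI : Fact (1 < N) := ⟨hN2⟩
        have : ((afun τ : (ZMod N)ˣ) : ZMod N) = 0 := by
          rw [← ZMod.val_eq_zero]; exact h0
        exact (afun τ).ne_zero this
      · exact h
    have step2 : ((ζL ^ (N / ℓ)) ^ v = ζL ^ (N / ℓ)) ↔ v ≡ 1 [MOD ℓ] := by
      have hne : (ζL ^ (N / ℓ)) ≠ 0 := hprim.ne_zero hℓpos.ne'
      constructor
      · intro hEq
        have h1 : (ζL ^ (N / ℓ)) ^ (v - 1) * (ζL ^ (N / ℓ)) = 1 * (ζL ^ (N / ℓ)) := by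
          rw [one_mul, ← pow_succ, Nat.sub_add_cancel hvpos]
          exact hEq
        have h2 := mul_right_cancel₀ hne h1
        have h3' := (hprim.pow_eq_one_iff_dvd _).mp h2
        exact ((Nat.modEq_iff_dvd' hvpos).mpr h3').symm
      · intro hmod
        obtain ⟨k, hk⟩ := (Nat.modEq_iff_dvd' hvpos).mp hmod.symm
        have hv1 : v = 1 + ℓ * k := by omega
        rw [hv1, pow_add, pow_one, pow_mul, hprim.pow_eq_one, one_pow, mul_one]
    have step3 : (ZMod.unitsMap (hdvd ℓ hm) (afun τ) = 1) ↔ v ≡ 1 [MOD ℓ] := by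
      rw [Units.ext_iff, ← ZMod.natCast_eq_natCast_iff]
      push_cast
      rw [ZMod.unitsMap_def]
      simp only [Units.coe_map, MonoidHom.coe_coe, ZMod.castHom_apply]
      rw [hv, ZMod.natCast_val]
    rw [step1, step2, step3]
  -- fixed points are in E
  have fixede : ∀ w : ↥L, (∀ τ : ↥L ≃ₐ[↥E] ↥L, τ w = w) → (w : ℂ) ∈ E := by
    intro w hw
    have hbot : w ∈ (⊥ : IntermediateField ↥E ↥L) := by
      rw [← IsGalois.fixedField_fixingSubgroup (⊥ : IntermediateField ↥E ↥L)]
      exact fun g => hw g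
    obtain ⟨k, hk⟩ := IntermediateField.mem_bot.mp hbot
    rw [← hk]
    exact k.2
  -- existence of automorphisms moving ζ_3 resp ζ_4
  have exmove : ∀ ℓ (hm : ℓ ∈ T), ℓ = 3 ∨ ℓ = 4 →
      ∃ τ : ↥L ≃ₐ[↥E] ↥L, ZMod.unitsMap (hdvd ℓ hm) (afun τ) ≠ 1 := by
    intro ℓ hm hor
    by_contra hcon
    push_neg at hcon
    have hmem : ζ ^ (N / ℓ) ∈ L := pow_mem hζmem _
    have hfix : (ζ ^ (N / ℓ)) ∈ E := by
      apply fixede ⟨ζ ^ (N / ℓ), hmem⟩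
      intro τ
      exact Subtype.ext ((key ℓ hm τ hmem).mpr (hcon τ))
    have hprimC : IsPrimitiveRoot (ζ ^ (N / ℓ)) ℓ :=
      hζ.pow hNpos (Nat.div_mul_cancel (hdvd ℓ hm)).symm
    have h2E : (2 : ℂ) ∈ E := by exact_mod_cast _root_.natCast_mem E 2
    rcases hor with rfl | rfl
    · have hcube : (ζ ^ (N / 3)) ^ 3 = 1 := hprimC.pow_eq_one
      have hne1 : ζ ^ (N / 3) ≠ 1 := hprimC.ne_one (by norm_num)
      have hquad : (ζ ^ (N / 3)) ^ 2 + ζ ^ (N / 3) + 1 = 0 := by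
        have hfac : (ζ ^ (N / 3) - 1) * ((ζ ^ (N / 3)) ^ 2 + ζ ^ (N / 3) + 1) = 0 := by
          linear_combination hcube
        rcases mul_eq_zero.mp hfac with h | h
        · exact absurd (sub_eq_zero.mp h) hne1
        · exact h
      refine hm3 (2 * ζ ^ (N / 3) + 1) ?_ ?_
      · exact add_mem (mul_mem h2E hfix) (one_mem E)
      · linear_combination 4 * hquad
    · have hquar : (ζ ^ (N / 4)) ^ 4 = 1 := hprimC.pow_eq_one
      have hne1 : (ζ ^ (N / 4)) ^ 2 ≠ 1 :=
        hprimC.pow_ne_one_of_pos_of_lt (by norm_num) (by norm_num)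
      have hsq : (ζ ^ (N / 4)) ^ 2 = -1 := by
        have hfac : ((ζ ^ (N / 4)) ^ 2 - 1) * ((ζ ^ (N / 4)) ^ 2 + 1) = 0 := by
          linear_combination hquar
        rcases mul_eq_zero.mp hfac with h | h
        · exact absurd (sub_eq_zero.mp h) hne1
        · linear_combination h
      exact hm1 (ζ ^ (N / 4)) hfix hsq
  -- combine: an automorphism moving both ζ_3 and ζ_4
  have hρex : ∃ ρ : ↥L ≃ₐ[↥E] ↥L, ∀ ℓ (hm : ℓ ∈ T), ℓ = 3 ∨ ℓ = 4 →
      ZMod.unitsMap (hdvd ℓ hm) (afun ρ) ≠ 1 := by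
    by_cases h3T : (3 : ℕ) ∈ T
    · by_cases h4T : (4 : ℕ) ∈ T
      · obtain ⟨τ3, hτ3⟩ := exmove 3 h3T (Or.inl rfl)
        obtain ⟨τ4, hτ4⟩ := exmove 4 h4T (Or.inr rfl)
        by_cases hA : ZMod.unitsMap (hdvd 4 h4T) (afun τ3) = 1
        · by_cases hB : ZMod.unitsMap (hdvd 3 h3T) (afun τ4) = 1
          · refine ⟨τ3 * τ4, ?_⟩
            intro ℓ hm hor
            rcases hor with rfl | rfl
            · rw [map_mul, map_mul, hB, mul_one]
              exact hτ3
            · rw [map_mul, map_mul, hA, one_mul]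
              exact hτ4
          · refine ⟨τ4, ?_⟩
            intro ℓ hm hor
            rcases hor with rfl | rfl
            exacts [hB, hτ4]
        · refine ⟨τ3, ?_⟩
          intro ℓ hm hor
          rcases hor with rfl | rfl
          exacts [hτ3, hA]
      · obtain ⟨τ3, hτ3⟩ := exmove 3 h3T (Or.inl rfl)
        refine ⟨τ3, ?_⟩
        intro ℓ hm hor
        rcases hor with rfl | rfl
        exacts [hτ3, absurd hm h4T]
    · by_cases h4T : (4 : ℕ) ∈ T
      · obtain ⟨τ4, hτ4⟩ := exmove 4 h4T (Or.inr rfl)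
        refine ⟨τ4, ?_⟩
        intro ℓ hm hor
        rcases hor with rfl | rfl
        exacts [absurd hm h3T, hτ4]
      · refine ⟨1, ?_⟩
        intro ℓ hm hor
        rcases hor with rfl | rfl
        exacts [absurd hm h3T, absurd hm h4T]
  obtain ⟨ρ, hρ⟩ := hρex
  -- squares are in the image of afun  (hard part)
  have powEq : ∀ a b : ℕ, ζL ^ a = ζL ^ b → ((a : ZMod N) = (b : ZMod N)) := by
    have main : ∀ a b : ℕ, b ≤ a → ζL ^ a = ζL ^ b → ((a : ZMod N) = (b : ZMod N)) := by
      intro a b hba hab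
      have hne : ζL ^ b ≠ 0 := pow_ne_zero _ (hζL.ne_zero hNpos.ne')
      have h1 : ζL ^ (a - b) * ζL ^ b = 1 * ζL ^ b := by
        rw [one_mul, ← pow_add, Nat.sub_add_cancel hba]
        exact hab
      have h2 := mul_right_cancel₀ hne h1
      have h3' := (hζL.pow_eq_one_iff_dvd _).mp h2
      rw [ZMod.natCast_eq_natCast_iff]
      exact ((Nat.modEq_iff_dvd' hba).mpr h3').symm
    intro a b hab
    rcases le_total b a with h | h
    · exact main a b h hab
    · exact (main b a h hab.symm).symm
  have sqex : ∀ x : (ZMod N)ˣ, ∃ τ : ↥L ≃ₐ[↥E] ↥L, afun τ = x * x := by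
    -- the cyclotomic field inside ℂ
    set Cyc := IntermediateField.adjoin ℚ ({ζ} : Set ℂ) with hCyc
    haveI cycQ : IsCyclotomicExtension {(np : ℕ)} ℚ ↥Cyc := adjoinCyclo (n := np) hζ
    set LQ := IntermediateField.restrictScalars ℚ L with hLQdef
    have hLQ : LQ = IntermediateField.adjoin ℚ ({z7, zt} ∪ {ζ}) :=
      adjoin_adjoin_left ℚ {z7, zt} {ζ}
    -- normality of LQ over ℚ
    set f : ℚ[X] := (X ^ 2 + C 7) * (X ^ 2 + C ((t : ℚ))) * (X ^ N - C 1) with hf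
    have hfmonic : f.Monic := by
      refine Polynomial.Monic.mul (Polynomial.Monic.mul ?_ ?_) ?_
      · exact monic_X_pow_add_C 7 (by norm_num)
      · exact monic_X_pow_add_C _ (by norm_num)
      · exact monic_X_pow_sub_C 1 hNpos.ne'
    have hf0 : f ≠ 0 := hfmonic.ne_zero
    have hroots : IntermediateField.adjoin ℚ (f.rootSet ℂ) =
        IntermediateField.adjoin ℚ ({z7, zt} ∪ {ζ}) := by
      apply le_antisymm
      · rw [IntermediateField.adjoin_le_iff]
        intro c hc
        rw [Polynomial.mem_rootSet] at hc
        have hc2 := hc.2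
        rw [hf] at hc2
        simp only [map_mul, map_add, map_pow, map_sub, map_one, aeval_X, aeval_C, map_ofNat] at hc2
        have halgt : ((algebraMap ℚ ℂ) (t : ℚ)) = ((t : ℚ) : ℂ) := by norm_cast
        rw [halgt] at hc2
        have hz7m : z7 ∈ IntermediateField.adjoin ℚ ({z7, zt} ∪ {ζ} : Set ℂ) :=
          subset_adjoin _ _ (Or.inl (Or.inl rfl))
        have hztm : zt ∈ IntermediateField.adjoin ℚ ({z7, zt} ∪ {ζ} : Set ℂ) :=
          subset_adjoin _ _ (Or.inl (Or.inr rfl))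
        have hζm' : ζ ∈ IntermediateField.adjoin ℚ ({z7, zt} ∪ {ζ} : Set ℂ) :=
          subset_adjoin _ _ (Or.inr rfl)
        rcases mul_eq_zero.mp hc2 with h12 | hN1
        · rcases mul_eq_zero.mp h12 with h1 | h2
          · have hcsq : c ^ 2 = z7 ^ 2 := by rw [hz7]; linear_combination h1
            have : (c - z7) * (c + z7) = 0 := by linear_combination hcsq
            rcases mul_eq_zero.mp this with h | h
            · have : c = z7 := by linear_combination h
              rw [this]; exact hz7m
            · have : c = -z7 := by linear_combination h
              rw [this]; exact neg_mem hz7m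
          · have hcsq : c ^ 2 = zt ^ 2 := by
              rw [hzt]
              linear_combination h2
            have : (c - zt) * (c + zt) = 0 := by linear_combination hcsq
            rcases mul_eq_zero.mp this with h | h
            · have : c = zt := by linear_combination h
              rw [this]; exact hztm
            · have : c = -zt := by linear_combination h
              rw [this]; exact neg_mem hztm
        · have hcN : c ^ N = 1 := by linear_combination hN1
          obtain ⟨i, -, rfl⟩ := hζ.eq_pow_of_pow_eq_one hcN
          exact pow_mem hζm' i
      · rw [IntermediateField.adjoin_le_iff]
        have hmem' : ∀ c : ℂ, (aeval c) f = 0 → c ∈ IntermediateField.adjoin ℚ (f.rootSet ℂ) := by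
          intro c hc
          exact subset_adjoin _ _ (by rw [Polynomial.mem_rootSet]; exact ⟨hf0, hc⟩)
        intro c hcgen
        apply hmem'
        rw [hf]
        simp only [map_mul, map_add, map_pow, map_sub, map_one, aeval_X, aeval_C, map_ofNat]
        have halgt : ((algebraMap ℚ ℂ) (t : ℚ)) = ((t : ℚ) : ℂ) := by norm_cast
        simp only [Set.mem_union, Set.mem_insert_iff, Set.mem_singleton_iff] at hcgen
        rcases hcgen with (hcg | hcg) | hcg
        · subst hcg
          rw [hz7]
          push_cast
          ring
        · subst hcg
          rw [halgt, hzt]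
          ring
        · subst hcg
          rw [hζ.pow_eq_one]
          ring
    haveI hnormal : Normal ℚ ↥LQ := by
      rw [hLQ, ← hroots]
      haveI := IntermediateField.adjoin_rootSet_isSplittingField
        (K := ℚ) (L := ℂ) (p := f) (IsAlgClosed.splits (f.map (algebraMap ℚ ℂ)))
      exact Normal.of_isSplittingField (hFEp := this) f
    -- inclusions
    have hζLQ : ζ ∈ LQ := hζmem
    have hz7LQ : z7 ∈ LQ := by
      rw [hLQ]; exact subset_adjoin _ _ (Or.inl (Or.inl rfl))
    have hztLQ : zt ∈ LQ := by
      rw [hLQ]; exact subset_adjoin _ _ (Or.inl (Or.inr rfl))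
    have hCycLQ : Cyc ≤ LQ := by
      rw [hCyc]
      rw [IntermediateField.adjoin_le_iff]
      rintro c rfl
      exact hζLQ
    letI : Algebra ↥Cyc ↥LQ := (IntermediateField.inclusion hCycLQ).toAlgebra
    haveI : IsScalarTower ℚ ↥Cyc ↥LQ := IsScalarTower.of_algebraMap_eq (fun q => rfl)
    -- the cyclotomic automorphism with action x
    intro x
    have hirr : Irreducible (Polynomial.cyclotomic ((np : ℕ)) ℚ) :=
      Polynomial.cyclotomic.irreducible_rat np.pos
    set eqP := IsCyclotomicExtension.autEquivPow ↥Cyc hirr with heqP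
    set γ0 := eqP.symm x with hγ0
    set zz := IsCyclotomicExtension.zeta np ℚ ↥Cyc with hzz
    have hzeta : IsPrimitiveRoot zz (np : ℕ) := IsCyclotomicExtension.zeta_spec np ℚ ↥Cyc
    set v := ((x : (ZMod N)ˣ) : ZMod N).val with hv
    have hzmain : γ0 zz = zz ^ v := by
      have h1 : eqP γ0 = x := eqP.apply_symm_apply x
      have h2 := hzeta.autToPow_spec ℚ γ0
      rw [IsCyclotomicExtension.autEquivPow_apply] at h1
      rw [← h2]
      congr 1
      rw [hv]
      congr 1
      exact congrArg (fun u : (ZMod N)ˣ => ((u : ZMod N))) h1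
    have hspec0 : ∀ μ : ↥Cyc, μ ^ N = 1 → γ0 μ = μ ^ v := by
      intro μ hμ
      obtain ⟨i, -, rfl⟩ := hzeta.eq_pow_of_pow_eq_one hμ
      rw [map_pow, hzmain, ← pow_mul, ← pow_mul, mul_comm]
    -- lift to LQ
    set γ := γ0.liftNormal ↥LQ with hγ
    have hζCycm : ζ ∈ Cyc := subset_adjoin _ _ rfl
    have hmapζ : (algebraMap ↥Cyc ↥LQ) ⟨ζ, hζCycm⟩ = (⟨ζ, hζLQ⟩ : ↥LQ) := rfl
    have hγζ : γ ⟨ζ, hζLQ⟩ = (⟨ζ, hζLQ⟩ : ↥LQ) ^ v := by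
      have hcomm := AlgEquiv.liftNormal_commutes γ0 ↥LQ ⟨ζ, hζCycm⟩
      rw [hmapζ] at hcomm
      rw [← hγ] at hcomm
      rw [hcomm, hspec0 ⟨ζ, hζCycm⟩ (by ext; push_cast; exact hζ.pow_eq_one), map_pow, hmapζ]
    set δ := γ.trans γ with hδ
    -- δ fixes square roots of rationals
    have fix2 : ∀ (w : ↥LQ) (q : ℚ), w ^ 2 = algebraMap ℚ ↥LQ q → δ w = w := by
      intro w q hw
      have h1 : (γ w) ^ 2 = w ^ 2 := by
        rw [← map_pow, hw, AlgEquiv.commutes]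
      have h2 : (γ w - w) * (γ w + w) = 0 := by linear_combination h1
      rcases mul_eq_zero.mp h2 with h | h
      · have heq : γ w = w := by linear_combination h
        show γ (γ w) = w
        rw [heq, heq]
      · have heq : γ w = -w := by linear_combination h
        show γ (γ w) = w
        rw [heq, map_neg, heq, neg_neg]
    have hfix7 : δ ⟨z7, hz7LQ⟩ = ⟨z7, hz7LQ⟩ := by
      refine fix2 _ (-7) ?_
      ext
      push_cast
      rw [hz7]
      norm_cast
    have hfixt : δ ⟨zt, hztLQ⟩ = ⟨zt, hztLQ⟩ := by
      refine fix2 _ (-(t : ℚ)) ?_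
      ext
      push_cast
      rw [hzt]
      norm_cast
    -- δ fixes all of E pointwise
    have hEfix : ∀ (c : ℂ) (hc : c ∈ E) (hc2 : c ∈ LQ), δ ⟨c, hc2⟩ = ⟨c, hc2⟩ := by
      have halg : ∀ y ∈ ({z7, zt} : Set ℂ), IsAlgebraic ℚ y := by
        rintro y (rfl | rfl)
        · refine ⟨X ^ 2 + C 7, (monic_X_pow_add_C 7 (by norm_num)).ne_zero, ?_⟩
          simp only [map_add, map_pow, aeval_X, aeval_C]
          rw [hz7]; norm_num
        · refine ⟨X ^ 2 + C ((t : ℚ)), (monic_X_pow_add_C _ (by norm_num)).ne_zero, ?_⟩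
          simp only [map_add, map_pow, aeval_X, aeval_C]
          rw [hzt]
          have : ((algebraMap ℚ ℂ) (t : ℚ)) = ((t : ℚ) : ℂ) := by norm_cast
          rw [this]; ring
      have hEsub : E.toSubalgebra = Algebra.adjoin ℚ {z7, zt} := by
        rw [hE]
        exact IntermediateField.adjoin_toSubalgebra_of_isAlgebraic halg
      set ψ : ↥LQ →ₐ[ℚ] ℂ := LQ.val.comp δ.toAlgHom with hψ
      set Seq := AlgHom.equalizer ψ LQ.val with hSeq
      have h7S : (⟨z7, hz7LQ⟩ : ↥LQ) ∈ Seq := by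
        show ψ ⟨z7, hz7LQ⟩ = LQ.val ⟨z7, hz7LQ⟩
        rw [hψ]
        change ((δ ⟨z7, hz7LQ⟩ : ↥LQ) : ℂ) = z7
        rw [hfix7]
      have htS : (⟨zt, hztLQ⟩ : ↥LQ) ∈ Seq := by
        show ψ ⟨zt, hztLQ⟩ = LQ.val ⟨zt, hztLQ⟩
        rw [hψ]
        change ((δ ⟨zt, hztLQ⟩ : ↥LQ) : ℂ) = zt
        rw [hfixt]
      have hsub : Algebra.adjoin ℚ ({⟨z7, hz7LQ⟩, ⟨zt, hztLQ⟩} : Set ↥LQ) ≤ Seq := by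
        rw [Algebra.adjoin_le_iff]
        rintro y (rfl | rfl)
        exacts [h7S, htS]
      intro c hc hc2
      have hcadj : c ∈ Algebra.adjoin ℚ ({z7, zt} : Set ℂ) := by
        rw [← hEsub]; exact hc
      have hcmap : c ∈ (Algebra.adjoin ℚ ({⟨z7, hz7LQ⟩, ⟨zt, hztLQ⟩} : Set ↥LQ)).map
          (LQ.val : ↥LQ →ₐ[ℚ] ℂ) := by
        erw [AlgHom.map_adjoin]
        have himg : (LQ.val : ↥LQ →ₐ[ℚ] ℂ) '' {⟨z7, hz7LQ⟩, ⟨zt, hztLQ⟩} = {z7, zt} := by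
          simp [Set.image_insert_eq]
        rw [himg]
        exact hcadj
      obtain ⟨d, hd, hdc⟩ := hcmap
      have hdS := hsub hd
      have hdeq : d = ⟨c, hc2⟩ := Subtype.ext hdc
      rw [← hdeq]
      have : ψ d = LQ.val d := hdS
      rw [hψ] at this
      change ((δ d : ↥LQ) : ℂ) = (d : ℂ) at this
      exact Subtype.ext this
    -- build the E-algebra automorphism of L
    have hcommE : ∀ k : ↥E, (δ.toRingEquiv : ↥L ≃+* ↥L) ((algebraMap ↥E ↥L) k) =
        (algebraMap ↥E ↥L) k := by
      intro k
      exact hEfix (k : ℂ) k.2 (by exact (algebraMap ↥E ↥L k).2)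
    set τ : ↥L ≃ₐ[↥E] ↥L := AlgEquiv.ofRingEquiv hcommE with hτdef
    refine ⟨τ, ?_⟩
    have hτζ : τ ζL = ζL ^ (v * v) := by
      have hstep : δ ⟨ζ, hζLQ⟩ = (⟨ζ, hζLQ⟩ : ↥LQ) ^ (v * v) := by
        show γ (γ ⟨ζ, hζLQ⟩) = _
        rw [hγζ, map_pow, hγζ, ← pow_mul]
      exact hstep
    have h1 : ζL ^ ((afun τ : (ZMod N)ˣ) : ZMod N).val = τ ζL := hζL.autToPow_spec ↥E τ
    rw [hτζ] at h1
    have h2 := powEq _ _ h1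
    ext
    rw [ZMod.natCast_val, ZMod.cast_id] at h2
    push_cast at h2
    rw [ZMod.natCast_val, ZMod.cast_id] at h2
    exact h2
  -- coprimality of the elements of T
  have hcp : ∀ a ∈ T, ∀ b ∈ T, a ≠ b → Nat.Coprime a b := by
    have odd4 : ∀ a, Nat.Prime a → a ≠ 2 → Nat.Coprime a 4 := by
      intro a hpa h2a
      have h2 : Nat.Coprime a 2 := (Nat.coprime_primes hpa Nat.prime_two).mpr h2a
      have : (4 : ℕ) = 2 * 2 := rfl
      rw [this]
      exact Nat.Coprime.mul_right h2 h2
    intro a ha b hb hab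
    rcases hT a ha with ⟨hpa, h2a⟩ | rfl
    · rcases hT b hb with ⟨hpb, h2b⟩ | rfl
      · exact (Nat.coprime_primes hpa hpb).mpr hab
      · exact odd4 a hpa h2a
    · rcases hT b hb with ⟨hpb, h2b⟩ | rfl
      · exact (odd4 b hpb h2b).symm
      · exact absurd rfl hab
  -- choose local adjustments
  have hex : ∀ ℓ ∈ T, ∃ y : (ZMod ℓ)ˣ, ∀ hd : ℓ ∣ N,
      (ZMod.unitsMap hd (afun σ)) ^ 4 * (y * y * ZMod.unitsMap hd (afun ρ)) ≠ 1 ∧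
        y * y * ZMod.unitsMap hd (afun ρ) ≠ 1 := by
    intro ℓ hm
    obtain ⟨y, hy1, hy2⟩ := keyChoice (hT ℓ hm) (ZMod.unitsMap (hdvd ℓ hm) (afun σ))
      (ZMod.unitsMap (hdvd ℓ hm) (afun ρ)) (fun hor => hρ ℓ hm hor)
    exact ⟨y, fun hd => ⟨hy1, hy2⟩⟩
  have hcrt := crtChoice T hcp (fun ℓ y => ∀ hd : ℓ ∣ N,
      (ZMod.unitsMap hd (afun σ)) ^ 4 * (y * y * ZMod.unitsMap hd (afun ρ)) ≠ 1 ∧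
        y * y * ZMod.unitsMap hd (afun ρ) ≠ 1) hex
  rw [← hN] at hcrt
  obtain ⟨x0, hx0⟩ := hcrt
  obtain ⟨τs, hτs⟩ := sqex x0
  set hh := τs * ρ with hhdef
  have memh : ∀ ℓ ∈ T, ∀ hmem : ζ ^ (N / ℓ) ∈ L,
      ((hh ⟨ζ ^ (N / ℓ), hmem⟩ : ↥L) : ℂ) ≠ ζ ^ (N / ℓ) := by
    intro ℓ hm hmem heq
    have h1 := (key ℓ hm hh hmem).mp heq
    rw [hhdef, map_mul, map_mul, hτs, map_mul] at h1
    exact (hx0 ℓ hm (hdvd ℓ hm) (hdvd ℓ hm)).2 h1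
  have memsh : ∀ ℓ ∈ T, ∀ hmem : ζ ^ (N / ℓ) ∈ L,
      (((σ ^ 4 * hh) ⟨ζ ^ (N / ℓ), hmem⟩ : ↥L) : ℂ) ≠ ζ ^ (N / ℓ) := by
    intro ℓ hm hmem heq
    have h1 := (key ℓ hm (σ ^ 4 * hh) hmem).mp heq
    rw [map_mul, map_pow, map_mul, map_pow, hhdef, map_mul, map_mul, hτs, map_mul] at h1
    exact (hx0 ℓ hm (hdvd ℓ hm) (hdvd ℓ hm)).1 h1
  have hfinal : σ ^ 4 = (σ ^ 4 * hh) * hh⁻¹ := by group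
  rw [hfinal]
  exact Subgroup.mul_mem _ (Subgroup.subset_closure memsh)
    (Subgroup.inv_mem _ (Subgroup.subset_closure memh))
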